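/- For every L > 0 there exists ε > 0 such that the following holds: for every c with 1/L ≤ |c| ≤ L and every h* with 1/L ≤ h* ≤ L, every 2π-periodic C⁴ function h : ℝ → ℝ with h(θ) > 0 for all θ, satisfying −c·h'(θ) + (d/dθ)[h(θ)³·(h'(θ) + h'''(θ))] = 0 for all θ ∈ ℝ, ∫₀^{2π} h(θ) dθ = 2π·h*, and |h(θ) − h*| ≤ ε for all θ, satisfies h(θ) = h* for all θ. -/

import Mathlib

open Real intervalIntegral Set

lemma periodic_deriv'' {f : ℝ → ℝ} {c : ℝ} (hf : Function.Periodic f c) :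
    Function.Periodic (deriv f) c := fun x => by
  have h : (fun y => f (y + c)) = f := funext hf
  rw [← deriv_comp_add_const f c x, h]

lemma travelling_aux (c K hstar ε : ℝ) (h h1 h2 h3 : ℝ → ℝ)
    (hcne : c ≠ 0) (hεsm : 5 * ε < hstar)
    (hH : ∀ x, HasDerivAt h (h1 x) x)
    (hH1 : ∀ x, HasDerivAt h1 (h2 x) x)
    (hH2 : ∀ x, HasDerivAt h2 (h3 x) x)
    (hcont3 : Continuous h3)
    (hper : Function.Periodic h (2 * π))
    (hpos : ∀ θ, 0 < h θ)
    (hkey : ∀ θ, (h θ) ^ 3 * (h1 θ + h3 θ) = c * h θ + K)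
    (hnear : ∀ θ, |h θ - hstar| ≤ ε) :
    ∀ θ, h1 θ = 0 := by
  have hπ : (0:ℝ) < 2 * π := by positivity
  have hch : Continuous h := continuous_iff_continuousAt.2 fun x => (hH x).continuousAt
  have hch1 : Continuous h1 := continuous_iff_continuousAt.2 fun x => (hH1 x).continuousAt
  have hch2 : Continuous h2 := continuous_iff_continuousAt.2 fun x => (hH2 x).continuousAt
  have e1 : deriv h = h1 := funext fun x => (hH x).deriv
  have e2 : deriv h1 = h2 := funext fun x => (hH1 x).deriv
  have e3 : deriv h2 = h3 := funext fun x => (hH2 x).deriv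
  have hper1 : Function.Periodic h1 (2 * π) := e1 ▸ periodic_deriv'' hper
  have hper2 : Function.Periodic h2 (2 * π) := e2 ▸ periodic_deriv'' hper1
  have hne : ∀ θ, h θ ≠ 0 := fun θ => ne_of_gt (hpos θ)
  have hlb : ∀ θ, hstar - ε ≤ h θ := fun θ => by
    have := abs_le.mp (hnear θ); linarith [this.1]
  have hub : ∀ θ, h θ ≤ hstar + ε := fun θ => by
    have := abs_le.mp (hnear θ); linarith [this.2]
  -- periodic boundary values
  have hbh : h (2 * π) = h 0 := by simpa using hper 0
  have hbh1 : h1 (2 * π) = h1 0 := by simpa using hper1 0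
  have hbh2 : h2 (2 * π) = h2 0 := by simpa using hper2 0
  -- key as division
  have hkey2 : ∀ θ, h1 θ + h3 θ = (c * h θ + K) / (h θ) ^ 3 := fun θ => by
    rw [eq_div_iff (pow_ne_zero 3 (hne θ)), mul_comm]; exact hkey θ
  -- u and its derivative
  set u : ℝ → ℝ := fun θ => (c * h θ + K) / (h θ) ^ 3 with hu_def
  set u' : ℝ → ℝ := fun θ => h1 θ * (-(2 * c * h θ) - 3 * K) / (h θ) ^ 4 with hu'_def
  have hu_cont : Continuous u :=
    ((continuous_const.mul hch).add continuous_const).div (hch.pow 3)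
      fun θ => pow_ne_zero 3 (hne θ)
  have hu'_cont : Continuous u' :=
    ((hch1.mul ((continuous_const.mul hch).neg.sub continuous_const)).div (hch.pow 4)
      fun θ => pow_ne_zero 4 (hne θ))
  have hU : ∀ x, HasDerivAt u (u' x) x := by
    intro x
    have hd : HasDerivAt (fun y => (h y) ^ 3) (3 * (h x) ^ 2 * h1 x) x := by
      exact ((hH x).fun_pow 3).congr_deriv (by norm_num)
    have hn : HasDerivAt (fun y => c * h y + K) (c * h1 x) x := ((hH x).const_mul c).add_const K
    have := hn.div hd (pow_ne_zero 3 (hne x))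
    have eq2 : u' x = (c * h1 x * (h x) ^ 3 - (c * h x + K) * (3 * (h x) ^ 2 * h1 x))
        / ((h x) ^ 3) ^ 2 := by
      simp only [hu'_def]
      field_simp [hne x]
      ring
    rw [eq2]
    exact this
  -- Integral B : ∫ (h1+h3) h2 = 0
  have hP : ∀ x, HasDerivAt (fun y => (h1 y ^ 2 + h2 y ^ 2) / 2) ((h1 x + h3 x) * h2 x) x := by
    intro x
    have := (((hH1 x).fun_pow 2).add ((hH2 x).fun_pow 2)).div_const 2
    exact this.congr_deriv (by norm_num; ring)
  have IB : (∫ x in (0:ℝ)..2 * π, (h1 x + h3 x) * h2 x) = 0 := by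
    rw [integral_eq_sub_of_hasDerivAt (fun x _ => hP x)
      (((hch1.add hcont3).mul hch2).intervalIntegrable _ _)]
    rw [hbh1, hbh2]; ring
  have IBu : (∫ x in (0:ℝ)..2 * π, u x * h2 x) = 0 := by
    have e : (∫ x in (0:ℝ)..2 * π, u x * h2 x)
        = ∫ x in (0:ℝ)..2 * π, (h1 x + h3 x) * h2 x := by
      apply integral_congr
      intro x _
      show u x * h2 x = (h1 x + h3 x) * h2 x
      rw [hkey2 x]
    rw [e, IB]
  -- integration by parts
  have IBP := integral_mul_deriv_eq_deriv_mul (a := 0) (b := 2 * π)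
    (u := u) (v := h1) (u' := u') (v' := h2)
    (fun x _ => hU x) (fun x _ => hH1 x)
    (hu'_cont.intervalIntegrable _ _) (hch2.intervalIntegrable _ _)
  have hub0 : u (2 * π) = u 0 := by simp only [hu_def, hbh]
  have Z : (∫ x in (0:ℝ)..2 * π, u' x * h1 x) = 0 := by
    rw [IBu, hub0, hbh1] at IBP
    linarith
  -- Integral A : ∫ u = 0
  have IA : (∫ x in (0:ℝ)..2 * π, u x) = 0 := by
    have e : (∫ x in (0:ℝ)..2 * π, u x) = ∫ x in (0:ℝ)..2 * π, (h1 x + h3 x) := by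
      apply integral_congr; intro x _
      show u x = h1 x + h3 x
      rw [hkey2 x]
    rw [e, integral_add (hch1.intervalIntegrable _ _) (hcont3.intervalIntegrable _ _),
      integral_eq_sub_of_hasDerivAt (fun x _ => hH x) (hch1.intervalIntegrable _ _),
      integral_eq_sub_of_hasDerivAt (fun x _ => hH2 x) (hcont3.intervalIntegrable _ _),
      hbh, hbh2]
    ring
  -- decompose IA
  set I2 : ℝ := ∫ x in (0:ℝ)..2 * π, 1 / (h x) ^ 2 with hI2_def
  set I3 : ℝ := ∫ x in (0:ℝ)..2 * π, 1 / (h x) ^ 3 with hI3_def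
  have hint2 : IntervalIntegrable (fun x => 1 / (h x) ^ 2) MeasureTheory.volume 0 (2 * π) :=
    (continuous_const.div (hch.pow 2) fun θ => pow_ne_zero 2 (hne θ)).intervalIntegrable _ _
  have hint3 : IntervalIntegrable (fun x => 1 / (h x) ^ 3) MeasureTheory.volume 0 (2 * π) :=
    (continuous_const.div (hch.pow 3) fun θ => pow_ne_zero 3 (hne θ)).intervalIntegrable _ _
  have IA2 : c * I2 + K * I3 = 0 := by
    have e : (∫ x in (0:ℝ)..2 * π, u x)
        = ∫ x in (0:ℝ)..2 * π, (c * (1 / (h x) ^ 2) + K * (1 / (h x) ^ 3)) := by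
      apply integral_congr; intro x _
      show u x = c * (1 / (h x) ^ 2) + K * (1 / (h x) ^ 3)
      simp only [hu_def]
      rw [div_eq_iff (pow_ne_zero 3 (hne x))]
      field_simp [hne x]
    rw [e, integral_add ((hint2.const_mul c)) ((hint3.const_mul K)),
      integral_const_mul, integral_const_mul] at IA
    exact IA
  have I3pos : 0 < I3 := by
    apply integral_pos hπ
    · exact (continuous_const.div (hch.pow 3) fun θ => pow_ne_zero 3 (hne θ)).continuousOn
    · intro x _; exact (one_div_pos.mpr (pow_pos (hpos x) 3)).le
    · exact ⟨0, ⟨le_rfl, hπ.le⟩, one_div_pos.mpr (pow_pos (hpos 0) 3)⟩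
  have hI3ne : I3 ≠ 0 := ne_of_gt I3pos
  -- bounds on I2 / I3
  have hI2low : (hstar - ε) * I3 ≤ I2 := by
    have e : (hstar - ε) * I3 = ∫ x in (0:ℝ)..2 * π, (hstar - ε) * (1 / (h x) ^ 3) := by
      rw [integral_const_mul]
    rw [e]
    apply integral_mono_on hπ.le (hint3.const_mul _) hint2
    intro x _
    have h3p : 0 < 1 / (h x) ^ 3 := one_div_pos.mpr (pow_pos (hpos x) 3)
    have e2 : h x * (1 / (h x) ^ 3) = 1 / (h x) ^ 2 := by
      rw [mul_one_div, div_eq_div_iff (pow_ne_zero 3 (hne x)) (pow_ne_zero 2 (hne x))]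
      ring
    calc (hstar - ε) * (1 / (h x) ^ 3) ≤ h x * (1 / (h x) ^ 3) :=
          mul_le_mul_of_nonneg_right (hlb x) h3p.le
      _ = 1 / (h x) ^ 2 := e2
  have hI2high : I2 ≤ (hstar + ε) * I3 := by
    have e : (hstar + ε) * I3 = ∫ x in (0:ℝ)..2 * π, (hstar + ε) * (1 / (h x) ^ 3) := by
      rw [integral_const_mul]
    rw [e]
    apply integral_mono_on hπ.le hint2 (hint3.const_mul _)
    intro x _
    have h3p : 0 < 1 / (h x) ^ 3 := one_div_pos.mpr (pow_pos (hpos x) 3)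
    have e2 : h x * (1 / (h x) ^ 3) = 1 / (h x) ^ 2 := by
      rw [mul_one_div, div_eq_div_iff (pow_ne_zero 3 (hne x)) (pow_ne_zero 2 (hne x))]
      ring
    calc 1 / (h x) ^ 2 = h x * (1 / (h x) ^ 3) := e2.symm
      _ ≤ (hstar + ε) * (1 / (h x) ^ 3) := mul_le_mul_of_nonneg_right (hub x) h3p.le
  set m : ℝ := I2 / I3 with hm_def
  have hK : K = -(c * m) := by
    have h' : K = (-(c * I2)) / I3 := by
      rw [eq_div_iff hI3ne]; linarith
    rw [h', hm_def]; field_simp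
  have hm1 : hstar - ε ≤ m := (le_div_iff₀ I3pos).2 hI2low
  have hm2 : m ≤ hstar + ε := (div_le_iff₀ I3pos).2 hI2high
  have claim : ∀ x, 0 < c ^ 2 * (3 * m - 2 * h x) := by
    intro x
    have h1' : hstar - 5 * ε ≤ 3 * m - 2 * h x := by
      have := hub x; linarith
    have hc2 : 0 < c ^ 2 := by positivity
    nlinarith
  -- the zero integral with sign-definite weight
  have Zc : (∫ x in (0:ℝ)..2 * π, (h1 x) ^ 2 * (c ^ 2 * (3 * m - 2 * h x)) / (h x) ^ 4) = 0 := by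
    have e : ∀ x, (h1 x) ^ 2 * (c ^ 2 * (3 * m - 2 * h x)) / (h x) ^ 4 = c * (u' x * h1 x) := by
      intro x
      simp only [hu'_def, hK]
      ring
    rw [integral_congr (fun x _ => e x), integral_const_mul, Z, mul_zero]
  have hzero : ∀ s ∈ Icc (0:ℝ) (2 * π), h1 s = 0 := by
    by_contra hcon
    push_neg at hcon
    obtain ⟨s, hs, hsne⟩ := hcon
    have hct : Continuous fun x => (h1 x) ^ 2 * (c ^ 2 * (3 * m - 2 * h x)) / (h x) ^ 4 :=
      ((hch1.pow 2).mul (continuous_const.mul (continuous_const.sub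
        (continuous_const.mul hch)))).div (hch.pow 4) fun θ => pow_ne_zero 4 (hne θ)
    have hposint : 0 < ∫ x in (0:ℝ)..2 * π,
        (h1 x) ^ 2 * (c ^ 2 * (3 * m - 2 * h x)) / (h x) ^ 4 := by
      apply integral_pos hπ hct.continuousOn
      · intro x _
        exact div_nonneg (mul_nonneg (sq_nonneg _) (claim x).le) (pow_pos (hpos x) 4).le
      · refine ⟨s, hs, ?_⟩
        have hs2 : 0 < (h1 s) ^ 2 :=
          lt_of_le_of_ne (sq_nonneg _) (Ne.symm (pow_ne_zero 2 hsne))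
        exact div_pos (mul_pos hs2 (claim s)) (pow_pos (hpos s) 4)
    rw [Zc] at hposint
    exact lt_irrefl 0 hposint
  intro θ
  obtain ⟨y, hy, hxy⟩ := hper1.exists_mem_Ico₀ hπ θ
  rw [hxy]
  exact hzero y ⟨hy.1, hy.2.le⟩

/-- Near-constant uniqueness for travelling waves (dominant surface tension)
    with prescribed average: for 1/L ≤ |c| ≤ L, a positive 2π-periodic C⁴
    solution of −c·h' + ∂_θ(h³(h' + h''')) = 0 with average h* that stays
    ε-close to h* equals h*. -/
theorem stmt_11 (L : ℝ) (hL : 0 < L) :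
    ∃ ε : ℝ, 0 < ε ∧
      ∀ c : ℝ, 1 / L ≤ |c| → |c| ≤ L →
        ∀ hstar : ℝ, 1 / L ≤ hstar → hstar ≤ L →
          ∀ h : ℝ → ℝ, Function.Periodic h (2 * π) → ContDiff ℝ 4 h →
            (∀ θ, 0 < h θ) →
            (∀ θ : ℝ, -c * deriv h θ
                + deriv (fun φ => (h φ) ^ 3 * (deriv h φ + iteratedDeriv 3 h φ)) θ
                = 0) →
            (∫ θ in (0:ℝ)..(2 * π), h θ) = 2 * π * hstar →
            (∀ θ : ℝ, |h θ - hstar| ≤ ε) →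
            ∀ θ : ℝ, h θ = hstar := by
  refine ⟨1 / (10 * L), by positivity, ?_⟩
  intro c hc1 hc2 hstar hs1 hs2 h hper hC4 hpos hODE havg hnear θ
  have hcne : c ≠ 0 := by
    intro h0
    rw [h0, abs_zero] at hc1
    have : (0:ℝ) < 1 / L := by positivity
    linarith
  have hεsm : 5 * (1 / (10 * L)) < hstar := by
    have e : 5 * (1 / (10 * L)) = 1 / (2 * L) := by field_simp; ring
    have e2 : 1 / L - 1 / (2 * L) = 1 / (2 * L) := by field_simp; ring
    have p : (0:ℝ) < 1 / (2 * L) := by positivity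
    linarith
  -- differentiability of derivatives
  have hd0 : Differentiable ℝ h := hC4.differentiable (by norm_num)
  have hd1 : Differentiable ℝ (deriv h) := by
    have := hC4.differentiable_iteratedDeriv 1 (by norm_num)
    rwa [iteratedDeriv_one] at this
  have e3 : iteratedDeriv 3 h = deriv (deriv (deriv h)) := by
    rw [iteratedDeriv_succ, iteratedDeriv_succ, iteratedDeriv_one]
  have hd2 : Differentiable ℝ (deriv (deriv h)) := by
    have := hC4.differentiable_iteratedDeriv 2 (by norm_num)
    rwa [show iteratedDeriv 2 h = deriv (deriv h) by
      rw [iteratedDeriv_succ, iteratedDeriv_one]] at this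
  have hd3 : Differentiable ℝ (deriv (deriv (deriv h))) := by
    have := hC4.differentiable_iteratedDeriv 3 (by norm_num)
    rwa [e3] at this
  have hH : ∀ x, HasDerivAt h (deriv h x) x := fun x => (hd0 x).hasDerivAt
  have hH1 : ∀ x, HasDerivAt (deriv h) (deriv (deriv h) x) x := fun x => (hd1 x).hasDerivAt
  have hH2 : ∀ x, HasDerivAt (deriv (deriv h)) (deriv (deriv (deriv h)) x) x :=
    fun x => (hd2 x).hasDerivAt
  have hcont3 : Continuous (deriv (deriv (deriv h))) := hd3.continuous
  -- constancy of the flux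
  set G : ℝ → ℝ := fun φ => (h φ) ^ 3 * (deriv h φ + deriv (deriv (deriv h)) φ) with hG_def
  have hGdiff : Differentiable ℝ G := (hd0.pow 3).mul (hd1.add hd3)
  have hODE' : ∀ x, deriv G x = c * deriv h x := by
    intro x
    have := hODE x
    rw [show (fun φ => (h φ) ^ 3 * (deriv h φ + iteratedDeriv 3 h φ)) = G by
      funext φ; rw [hG_def, e3]] at this
    linarith
  set F : ℝ → ℝ := fun φ => G φ - c * h φ with hF_def
  have hFdiff : Differentiable ℝ F := hGdiff.sub (hd0.const_mul c)
  have hF' : ∀ x, deriv F x = 0 := by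
    intro x
    rw [hF_def]
    rw [deriv_fun_sub (hGdiff x) ((hd0.const_mul c) x), deriv_const_mul c (hd0 x), hODE' x]
    ring
  have hFconst := is_const_of_deriv_eq_zero hFdiff hF'
  have hkey : ∀ x, (h x) ^ 3 * (deriv h x + deriv (deriv (deriv h)) x) = c * h x + F 0 := by
    intro x
    have := hFconst x 0
    simp only [hF_def, hG_def] at this ⊢
    linarith
  -- apply the key lemma
  have hz : ∀ x, deriv h x = 0 :=
    travelling_aux c (F 0) hstar (1 / (10 * L)) h (deriv h) (deriv (deriv h))
      (deriv (deriv (deriv h))) hcne hεsm hH hH1 hH2 hcont3 hper hpos hkey hnear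
  have hconst := is_const_of_deriv_eq_zero hd0 hz
  have havg' : (∫ x in (0:ℝ)..(2 * π), h x) = 2 * π * h 0 := by
    rw [show (fun x => h x) = fun _ => h 0 by funext x; exact hconst x 0]
    rw [integral_const]
    simp [mul_comm]
  have hπ' : (2:ℝ) * π ≠ 0 := by positivity
  have : h 0 = hstar := mul_left_cancel₀ hπ' (havg'.symm.trans havg)
  rw [hconst θ 0, this]
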